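/- The function r is continuous on the open interval (0, π/4); in particular it is continuous at each point α = π/(4k), k ≥ 2 an integer, where the floor ⌊π/(4α)⌋ jumps (because sin((2k+1)·π/(4k)) = sin((2k−1)·π/(4k)) = cos(π/(4k))). -/

import Mathlib

open Real Topology Filter

/-- `r(α) = sin α / sin((2·⌊π/(4α)⌋ + 1)·α)`: the ratio `|CC'|/|BB'|` in the
construction of a zero-resistance body of revolution from two isosceles trapezia
with base angle `π/2 − α`. -/
noncomputable def rRatio (α : ℝ) : ℝ :=
  Real.sin α / Real.sin (((2 * ⌊π / (4 * α)⌋ + 1 : ℤ) : ℝ) * α)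

lemma rRatio_eq {α : ℝ} (hα : 0 < α) :
    rRatio α = Real.sin α / Real.cos ((2 * Int.fract (π / (4 * α)) - 1) * α) := by
  have key : (((2 * ⌊π / (4 * α)⌋ + 1 : ℤ) : ℝ)) * α
      = π / 2 - (2 * Int.fract (π / (4 * α)) - 1) * α := by
    have hfl : (⌊π / (4 * α)⌋ : ℝ) = π / (4 * α) - Int.fract (π / (4 * α)) := by
      rw [Int.self_sub_fract]
    push_cast [hfl]
    field_simp
    ring
  rw [rRatio, key, Real.sin_pi_div_two_sub]

lemma rRatio_continuousOn_aux :
    ContinuousOn rRatio (Set.Ioo 0 (π / 4)) := by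
  rw [continuousOn_iff_continuous_restrict]
  have heq : (Set.Ioo 0 (π / 4)).restrict rRatio
      = fun x : Set.Ioo 0 (π / 4) =>
        (fun (x : Set.Ioo 0 (π / 4)) (u : ℝ) =>
          Real.sin x / Real.cos ((2 * u - 1) * x)) x (Int.fract (π / (4 * (x : ℝ)))) := by
    funext x
    exact rRatio_eq x.2.1
  show Continuous ((Set.Ioo 0 (π / 4)).restrict rRatio)
  rw [heq]
  refine ContinuousOn.comp_fract
    (f := fun (x : Set.Ioo 0 (π / 4)) (u : ℝ) => Real.sin x / Real.cos ((2 * u - 1) * x))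
    (s := fun x : Set.Ioo 0 (π / 4) => π / (4 * (x : ℝ))) ?_ ?_ ?_
  · -- continuity of uncurry f on univ ×ˢ Icc 0 1
    apply ContinuousOn.div
    · exact (Real.continuous_sin.comp (continuous_subtype_val.comp continuous_fst)).continuousOn
    · exact (Real.continuous_cos.comp (((continuous_const.mul continuous_snd).sub
        continuous_const).mul (continuous_subtype_val.comp continuous_fst))).continuousOn
    · rintro ⟨x, u⟩ ⟨-, hu0, hu1⟩
      apply ne_of_gt
      apply Real.cos_pos_of_mem_Ioo
      constructor
      · have : |(2 * u - 1) * (x : ℝ)| ≤ (x : ℝ) := by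
          rw [abs_mul]
          calc |2 * u - 1| * |(x:ℝ)| ≤ 1 * |(x:ℝ)| := by
                apply mul_le_mul_of_nonneg_right _ (abs_nonneg _)
                rw [abs_le]; constructor <;> nlinarith
            _ = |(x:ℝ)| := one_mul _
            _ = (x:ℝ) := abs_of_pos x.2.1
        nlinarith [abs_le.mp this, x.2.2, Real.pi_pos]
      · have : |(2 * u - 1) * (x : ℝ)| ≤ (x : ℝ) := by
          rw [abs_mul]
          calc |2 * u - 1| * |(x:ℝ)| ≤ 1 * |(x:ℝ)| := by
                apply mul_le_mul_of_nonneg_right _ (abs_nonneg _)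
                rw [abs_le]; constructor <;> nlinarith
            _ = (x:ℝ) := by rw [one_mul, abs_of_pos x.2.1]
        nlinarith [abs_le.mp this, x.2.2, Real.pi_pos]
  · exact continuous_const.div (continuous_const.mul continuous_subtype_val)
      (fun x => by have := x.2.1; positivity)
  · intro s
    show Real.sin s / Real.cos ((2*(0:ℝ)-1)*(s:ℝ)) = Real.sin s / Real.cos ((2*(1:ℝ)-1)*(s:ℝ))
    rw [show (2 * (0:ℝ) - 1) * (s:ℝ) = -(s:ℝ) by ring, show (2 * (1:ℝ) - 1) * (s:ℝ) = (s:ℝ) by ring,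
      Real.cos_neg]

/-- The function `r` is continuous on the open interval `(0, π/4)`; in particular
it is continuous at each point `α = π/(4k)`, `k ≥ 2` an integer, where the floor
`⌊π/(4α)⌋` jumps (because `sin((2k+1)·π/(4k)) = sin((2k−1)·π/(4k)) = cos(π/(4k))`). -/
theorem rRatio_continuousOn :
    ContinuousOn rRatio (Set.Ioo 0 (π / 4)) ∧
    ∀ k : ℕ, 2 ≤ k →
      ContinuousWithinAt rRatio (Set.Ioo 0 (π / 4)) (π / (4 * k)) ∧
      Real.sin ((2 * (k : ℝ) + 1) * (π / (4 * k))) = Real.cos (π / (4 * k)) ∧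
      Real.sin ((2 * (k : ℝ) - 1) * (π / (4 * k))) = Real.cos (π / (4 * k)) := by
  refine ⟨rRatio_continuousOn_aux, fun k hk => ?_⟩
  have hk0 : (0:ℝ) < (k:ℝ) := by positivity
  have hmem : π / (4 * (k:ℝ)) ∈ Set.Ioo 0 (π / 4) := by
    constructor
    · positivity
    · rw [div_lt_div_iff₀ (by positivity) (by positivity)]
      have hk2 : (2:ℝ) ≤ (k:ℝ) := by exact_mod_cast hk
      nlinarith [Real.pi_pos]
  refine ⟨rRatio_continuousOn_aux _ hmem, ?_, ?_⟩
  · have : (2 * (k:ℝ) + 1) * (π / (4 * k)) = π / (4 * k) + π / 2 := by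
      field_simp; ring
    rw [this, Real.sin_add_pi_div_two]
  · have : (2 * (k:ℝ) - 1) * (π / (4 * k)) = π / 2 - π / (4 * k) := by
      field_simp; ring
    rw [this, Real.sin_pi_div_two_sub]
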